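/- arXiv:2205.02984 — 4 statements merged into one kernel-verified Lean document; each statement's English description precedes it below -/
import Mathlib

section
/- If D is a common divisor of real polynomials F and G, and r is a common real root of F and G (equivalently a root of D when D = gcd), then for every j, Σ_{i=1}^m b_{ij} r^{i-1} = 0, where (b_{ij}) = Bez(F,G); i.e., the vector (1, r, r^2, ..., r^{m-1}) lies in the left kernel of the Bézout matrix. -/
open Polynomial

/-- The Bézoutian of `F` and `G`: the bivariate polynomial
`(F(x)G(y) - F(y)G(x))/(x - y)`, represented as an element of `(ℝ[X])[Y]`
where the inner variable is `x` and the outer variable is `y`. -/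
noncomputable def bezoutian (F G : ℝ[X]) : Polynomial ℝ[X] :=
  -((Polynomial.C F * G.map Polynomial.C - F.map Polynomial.C * Polynomial.C G) /ₘ
      (Polynomial.X - Polynomial.C Polynomial.X))

/-- The `m × m` Bézout matrix of `F` and `G`: entry `(i, j)` (0-based) is the
coefficient of `x^i y^j` in the Bézoutian. -/
noncomputable def bezMat (m : ℕ) (F G : ℝ[X]) : Matrix (Fin m) (Fin m) ℝ :=
  fun i j => ((bezoutian F G).coeff (j : ℕ)).coeff (i : ℕ)

/-- The variable-swap ring hom on `(ℝ[X])[Y]`. -/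
noncomputable def swapHom : Polynomial (Polynomial ℝ) →+* Polynomial (Polynomial ℝ) :=
  eval₂RingHom (eval₂RingHom ((Polynomial.C : ℝ[X] →+* Polynomial ℝ[X]).comp
    (Polynomial.C : ℝ →+* ℝ[X])) Polynomial.X) (Polynomial.C Polynomial.X)

lemma swapHom_C (q : ℝ[X]) : swapHom (Polynomial.C q) = q.map Polynomial.C := by
  simp only [swapHom, coe_eval₂RingHom, eval₂_C]
  rfl

lemma swapHom_X : swapHom Polynomial.X = Polynomial.C Polynomial.X := by
  simp [swapHom]

lemma swapHom_map_C (q : ℝ[X]) : swapHom (q.map Polynomial.C) = Polynomial.C q := by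
  induction q using Polynomial.induction_on' with
  | add p q hp hq => simp [Polynomial.map_add, hp, hq]
  | monomial n a =>
    rw [Polynomial.map_monomial, ← Polynomial.C_mul_X_pow_eq_monomial, map_mul, map_pow,
      swapHom_C, swapHom_X, Polynomial.map_C, ← Polynomial.C_pow, ← map_mul,
      Polynomial.C_mul_X_pow_eq_monomial]

lemma swapHom_coeff (p : Polynomial ℝ[X]) (i j : ℕ) :
    ((swapHom p).coeff j).coeff i = (p.coeff i).coeff j := by
  induction p using Polynomial.induction_on' with
  | add p q hp hq => simp [hp, hq]
  | monomial n q =>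
    rw [← Polynomial.C_mul_X_pow_eq_monomial, map_mul, map_pow, swapHom_C, swapHom_X,
      ← Polynomial.C_pow, Polynomial.coeff_mul_C, Polynomial.coeff_C_mul,
      Polynomial.coeff_map, Polynomial.coeff_C_mul, Polynomial.coeff_X_pow]
    by_cases h : i = n <;> simp [h, Polynomial.coeff_map]

theorem bezMat_left_kernel_of_common_root (m : ℕ) (F G D : ℝ[X])
    (hF : F.natDegree ≤ m) (hG : G.natDegree ≤ m)
    (hDF : D ∣ F) (hDG : D ∣ G) (r : ℝ)
    (hFr : F.eval r = 0) (hGr : G.eval r = 0) :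
    ∀ j : Fin m, ∑ i : Fin m, bezMat m F G i j * r ^ (i : ℕ) = 0 := by
  intro j
  classical
  set P : Polynomial ℝ[X] :=
    Polynomial.C F * G.map Polynomial.C - F.map Polynomial.C * Polynomial.C G with hPdef
  set B := bezoutian F G with hBdef
  -- X - C X is nonzero, C X - X is nonzero with natDegree 1
  have hmonic : (Polynomial.X - Polynomial.C Polynomial.X : Polynomial ℝ[X]).Monic :=
    monic_X_sub_C _
  have hC0 : (Polynomial.C Polynomial.X - Polynomial.X : Polynomial ℝ[X]) ≠ 0 := by
    rw [show (Polynomial.C Polynomial.X - Polynomial.X : Polynomial ℝ[X])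
      = -(Polynomial.X - Polynomial.C Polynomial.X) by ring]
    exact neg_ne_zero.mpr hmonic.ne_zero
  have hCdeg : (Polynomial.C Polynomial.X - Polynomial.X : Polynomial ℝ[X]).natDegree = 1 := by
    rw [show (Polynomial.C Polynomial.X - Polynomial.X : Polynomial ℝ[X])
      = -(Polynomial.X - Polynomial.C Polynomial.X) by ring, natDegree_neg, natDegree_X_sub_C]
  -- P has X as a root (in the outer variable)
  have hroot : P.IsRoot Polynomial.X := by
    simp [hPdef, IsRoot, eval_map, eval₂_C_X]
  have hP : (Polynomial.X - Polynomial.C Polynomial.X) *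
      (P /ₘ (Polynomial.X - Polynomial.C Polynomial.X)) = P :=
    mul_divByMonic_eq_iff_isRoot.2 hroot
  have hPB : P = (Polynomial.C Polynomial.X - Polynomial.X) * B := by
    have h7 : (Polynomial.C Polynomial.X - Polynomial.X) * B
        = (Polynomial.X - Polynomial.C Polynomial.X) *
          (P /ₘ (Polynomial.X - Polynomial.C Polynomial.X)) := by
      rw [hBdef, bezoutian, ← hPdef]; ring
    rw [h7, hP]
  -- degree of P in the outer variable is at most m
  have hdegP : P.natDegree ≤ m := by
    refine le_trans (natDegree_sub_le _ _) (max_le ?_ ?_)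
    · calc (Polynomial.C F * G.map Polynomial.C).natDegree
          ≤ (Polynomial.C F).natDegree + (G.map Polynomial.C).natDegree := natDegree_mul_le
        _ ≤ 0 + G.natDegree := add_le_add (le_of_eq (natDegree_C _)) natDegree_map_le
        _ ≤ m := by simpa using hG
    · calc (F.map Polynomial.C * Polynomial.C G).natDegree
          ≤ (F.map Polynomial.C).natDegree + (Polynomial.C G).natDegree := natDegree_mul_le
        _ ≤ F.natDegree + 0 := add_le_add natDegree_map_le (le_of_eq (natDegree_C _))
        _ ≤ m := by simpa using hF
  -- outer coefficients of B vanish from degree m on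
  have hBdeg : ∀ k, m ≤ k → B.coeff k = 0 := by
    intro k hk
    by_cases hB0 : B = 0
    · simp [hB0]
    · apply coeff_eq_zero_of_natDegree_lt
      have h1 : P.natDegree = 1 + B.natDegree := by
        rw [hPB, natDegree_mul hC0 hB0, hCdeg]
      omega
  -- B is symmetric under swapping the variables
  have hσP : swapHom P = -P := by
    simp only [hPdef, map_sub, map_mul, swapHom_C, swapHom_map_C]
    ring
  have hσB : swapHom B = B := by
    have h2 := congrArg swapHom hPB
    rw [hσP, map_mul, map_sub, swapHom_C, swapHom_X, Polynomial.map_X] at h2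
    have h3 : (Polynomial.X - Polynomial.C Polynomial.X) * swapHom B
        = (Polynomial.X - Polynomial.C Polynomial.X) * B := by
      have h4 : -P = (Polynomial.X - Polynomial.C Polynomial.X) * B := by
        rw [hPB]; ring
      rw [← h2, h4]
    exact mul_left_cancel₀ hmonic.ne_zero h3
  -- inner coefficients of B.coeff j vanish from degree m on
  have hQ0 : ∀ i, m ≤ i → (B.coeff (j : ℕ)).coeff i = 0 := by
    intro i hi
    have := swapHom_coeff B i (j : ℕ)
    rw [hσB] at this
    rw [show ((B.coeff (j : ℕ)).coeff i) = ((swapHom B).coeff (j:ℕ)).coeff i by rw [hσB],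
      swapHom_coeff, hBdeg i hi, Polynomial.coeff_zero]
  -- evaluation at r kills B
  have hmapB : B.map (evalRingHom r) = 0 := by
    have h0 : P.map (evalRingHom r) = 0 := by
      simp [hPdef, Polynomial.map_mul, Polynomial.map_sub, Polynomial.map_C, Polynomial.map_map,
        hFr, hGr]
    have h5 := congrArg (Polynomial.map (evalRingHom r)) hPB
    rw [h0, Polynomial.map_mul, Polynomial.map_sub, Polynomial.map_C, Polynomial.map_X] at h5
    have hne : (Polynomial.C (Polynomial.X.eval r) - Polynomial.X : ℝ[X]) ≠ 0 := by
      intro h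
      have := congrArg (fun p => Polynomial.coeff p 1) h
      simp at this
    simpa using (mul_eq_zero.mp h5.symm).resolve_left (by simpa using hne)
  have heval : (B.coeff (j : ℕ)).eval r = 0 := by
    have h6 := congrArg (fun p => Polynomial.coeff p (j : ℕ)) hmapB
    simpa [Polynomial.coeff_map] using h6
  -- now combine
  set Q := B.coeff (j : ℕ) with hQdef
  have hsum : ∑ i : Fin m, bezMat m F G i j * r ^ (i : ℕ)
      = ∑ i ∈ Finset.range m, Q.coeff i * r ^ i := by
    rw [← Fin.sum_univ_eq_sum_range (fun i => Q.coeff i * r ^ i) m]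
    rfl
  by_cases hQz : Q = 0
  · simp [hsum, hQz]
  · have hdeg : Q.natDegree < m := by
      by_contra h
      push_neg at h
      exact hQz (Polynomial.leadingCoeff_eq_zero.mp (hQ0 _ h))
    rw [hsum, ← eval_eq_sum_range' hdeg r, heval]
end

section
/- If real polynomials F and G of degree at most m (with F of degree exactly m) have a common divisor of degree d, then the rank of the Bézout matrix Bez(F,G) is at most m - d. -/
open Polynomial

lemma X_sub_CX_mul_bez (F G : ℝ[X]) :
    (Polynomial.X - Polynomial.C Polynomial.X) * bezoutian F G
      = -(Polynomial.C F * G.map Polynomial.C - F.map Polynomial.C * Polynomial.C G) := by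
  have hm : (Polynomial.X - Polynomial.C (Polynomial.X : ℝ[X])).Monic := monic_X_sub_C _
  have hmod : (Polynomial.C F * G.map Polynomial.C - F.map Polynomial.C * Polynomial.C G) %ₘ
      (Polynomial.X - Polynomial.C Polynomial.X) = 0 := by
    rw [modByMonic_X_sub_C_eq_C_eval]
    have : (Polynomial.C F * G.map Polynomial.C
        - F.map Polynomial.C * Polynomial.C G).eval Polynomial.X = 0 := by
      simp [eval_map, eval₂_C_X, mul_comm]
    rw [this, map_zero]
  have h := modByMonic_add_div
    (Polynomial.C F * G.map Polynomial.C - F.map Polynomial.C * Polynomial.C G)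
    (Polynomial.X - Polynomial.C Polynomial.X)
  rw [hmod, zero_add] at h
  rw [bezoutian]
  linear_combination -h

lemma bez_mul (D F G : ℝ[X]) :
    bezoutian (D * F) (D * G)
      = Polynomial.C D * D.map Polynomial.C * bezoutian F G := by
  have hne : (Polynomial.X - Polynomial.C (Polynomial.X : ℝ[X])) ≠ 0 :=
    (monic_X_sub_C _).ne_zero
  apply mul_left_cancel₀ hne
  rw [X_sub_CX_mul_bez,
    show (Polynomial.X - Polynomial.C Polynomial.X) *
        (Polynomial.C D * D.map Polynomial.C * bezoutian F G)
      = Polynomial.C D * D.map Polynomial.C *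
        ((Polynomial.X - Polynomial.C Polynomial.X) * bezoutian F G) by ring,
    X_sub_CX_mul_bez]
  simp only [Polynomial.map_mul, map_mul]
  ring

lemma bez_coeff_eq_zero {n : ℕ} {F G : ℝ[X]} (hF : F.natDegree ≤ n) (hG : G.natDegree ≤ n)
    {l : ℕ} (hl : n ≤ l) : (bezoutian F G).coeff l = 0 := by
  rcases Nat.eq_zero_or_pos n with h0 | hpos
  · subst h0
    have hFc : F = Polynomial.C (F.coeff 0) := eq_C_of_natDegree_le_zero hF
    have hGc : G = Polynomial.C (G.coeff 0) := eq_C_of_natDegree_le_zero hG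
    have : bezoutian F G = 0 := by
      rw [bezoutian, hFc, hGc]
      simp [map_C, mul_comm]
    simp [this]
  · apply coeff_eq_zero_of_natDegree_lt
    rw [bezoutian, natDegree_neg,
      natDegree_divByMonic _ (monic_X_sub_C (Polynomial.X : ℝ[X]))]
    have h1 : (Polynomial.X - Polynomial.C (Polynomial.X : ℝ[X])).natDegree = 1 :=
      natDegree_X_sub_C _
    have h2 : (Polynomial.C F * G.map Polynomial.C
        - F.map Polynomial.C * Polynomial.C G).natDegree ≤ n := by
      apply le_trans (natDegree_sub_le _ _)
      simp only [max_le_iff]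
      constructor
      · refine le_trans natDegree_mul_le ?_
        have h3 : (G.map (Polynomial.C : ℝ →+* ℝ[X])).natDegree ≤ n :=
          le_trans natDegree_map_le hG
        simpa using h3
      · refine le_trans natDegree_mul_le ?_
        have h3 : (F.map (Polynomial.C : ℝ →+* ℝ[X])).natDegree ≤ n :=
          le_trans natDegree_map_le hF
        simpa using h3
    omega

theorem bezMat_rank_le_of_common_divisor (m d : ℕ) (F G D : ℝ[X])
    (hF : F.natDegree = m) (hG : G.natDegree ≤ m)
    (hDF : D ∣ F) (hDG : D ∣ G) (hd : D.natDegree = d) :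
    (bezMat m F G).rank ≤ m - d := by
  rcases Nat.eq_zero_or_pos m with hm0 | hm
  · subst hm0
    have h := Matrix.rank_le_card_width (bezMat 0 F G)
    simp only [Fintype.card_fin] at h
    omega
  · have hF0 : F ≠ 0 := by
      intro h; rw [h] at hF; simp at hF; omega
    have hD0 : D ≠ 0 := by
      intro h; rw [h] at hDF; exact hF0 (zero_dvd_iff.mp hDF)
    obtain ⟨F₁, hF₁⟩ := hDF
    obtain ⟨G₁, hG₁⟩ := hDG
    have hF₁0 : F₁ ≠ 0 := by
      intro h; rw [h, mul_zero] at hF₁; exact hF0 hF₁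
    set n := m - d with hn
    have hdm : d ≤ m := by
      rw [← hd, ← hF]
      exact natDegree_le_of_dvd ⟨F₁, hF₁⟩ hF0
    have hdF₁ : F₁.natDegree ≤ n := by
      have h := natDegree_mul hD0 hF₁0
      rw [← hF₁, hF, hd] at h
      omega
    have hdG₁ : G₁.natDegree ≤ n := by
      by_cases hG₁0 : G₁ = 0
      · simp [hG₁0]
      · have h := natDegree_mul hD0 hG₁0
        rw [← hG₁, hd] at h
        omega
    set B := bezoutian F₁ G₁ with hB
    have hBz : ∀ l : ℕ, n ≤ l → B.coeff l = 0 := fun l hl =>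
      bez_coeff_eq_zero hdF₁ hdG₁ hl
    set M : Matrix (Fin m) (Fin n) ℝ :=
      fun i l => ((D * B.coeff (l : ℕ)).coeff (i : ℕ)) with hM
    set A : Matrix (Fin n) (Fin m) ℝ :=
      fun l j => if (l : ℕ) ≤ (j : ℕ) then D.coeff ((j : ℕ) - (l : ℕ)) else 0 with hA
    have key : bezMat m F G = M * A := by
      ext i j
      rw [Matrix.mul_apply]
      show ((bezoutian F G).coeff (j : ℕ)).coeff (i : ℕ) = _
      rw [hF₁, hG₁, bez_mul,
        show Polynomial.C D * D.map Polynomial.C * B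
          = (Polynomial.C D * B) * D.map Polynomial.C by ring,
        coeff_mul, finset_sum_coeff]
      simp only [coeff_C_mul, coeff_map, coeff_mul_C]
      rw [Finset.Nat.sum_antidiagonal_eq_sum_range_succ_mk]
      set f : ℕ → ℝ := fun l => if l ≤ (j : ℕ) then
          (D * B.coeff l).coeff (i : ℕ) * D.coeff ((j : ℕ) - l) else 0 with hf
      have hfz : ∀ l : ℕ, n ≤ l → f l = 0 := by
        intro l hl
        simp only [hf, hBz l hl, mul_zero, coeff_zero, zero_mul, ite_self]
      have ext1 : ∑ l ∈ Finset.range ((j : ℕ) + 1), f l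
          = ∑ l ∈ Finset.range ((j : ℕ) + 1 + n), f l :=
        Finset.sum_subset (Finset.range_subset_range.mpr (by omega)) (fun l _ hl => by
          rw [Finset.mem_range] at hl
          simp [hf, show ¬ l ≤ (j : ℕ) by omega])
      have ext2 : ∑ l ∈ Finset.range n, f l
          = ∑ l ∈ Finset.range ((j : ℕ) + 1 + n), f l :=
        Finset.sum_subset (Finset.range_subset_range.mpr (by omega)) (fun l _ hl => by
          rw [Finset.mem_range] at hl
          exact hfz l (by omega))
      have left : ∑ l ∈ Finset.range ((j : ℕ) + 1),
          (D * B.coeff l).coeff (i : ℕ) * D.coeff ((j : ℕ) - l)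
          = ∑ l ∈ Finset.range ((j : ℕ) + 1), f l :=
        Finset.sum_congr rfl (fun l hl => by
          rw [Finset.mem_range] at hl
          simp [hf, Nat.lt_succ_iff.mp hl])
      have right : (∑ l : Fin n, M i l * A l j) = ∑ l ∈ Finset.range n, f l := by
        rw [← Fin.sum_univ_eq_sum_range (fun l => f l) n]
        apply Finset.sum_congr rfl
        intro l _
        simp only [hM, hA, hf, mul_ite, mul_zero]
      rw [left, ext1, right, ext2]
    rw [key]
    calc (M * A).rank ≤ M.rank := Matrix.rank_mul_le_left M A
      _ ≤ Fintype.card (Fin n) := Matrix.rank_le_card_width M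
      _ = n := Fintype.card_fin n
end

section
/- Two real polynomials F and G, with deg F = m ≥ 1 and deg G ≤ m, G ≠ 0, are coprime if and only if their Bézout matrix Bez(F,G) is nonsingular. -/
open Polynomial

namespace BezAux
noncomputable def NN (F G : ℝ[X]) : Polynomial ℝ[X] :=
  C F * G.map C - F.map C * C G
lemma monicYX : (X - C (X : ℝ[X])).Monic := monic_X_sub_C _
lemma NN_dvd (F G : ℝ[X]) : (X - C (X : ℝ[X])) ∣ NN F G := by
  rw [dvd_iff_isRoot]
  simp [NN, IsRoot, eval_map, eval₂_C_X, mul_comm]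
lemma NN_eq (F G : ℝ[X]) :
    NN F G = (X - C (X : ℝ[X])) * (NN F G /ₘ (X - C X)) := by
  have h := modByMonic_add_div (NN F G) (X - C (X : ℝ[X]))
  rw [(modByMonic_eq_zero_iff_dvd monicYX).mpr (NN_dvd F G)] at h
  simpa using h.symm
lemma bez_eq (F G : ℝ[X]) : bezoutian F G = -(NN F G /ₘ (X - C X)) := rfl
lemma bez_mul (F G : ℝ[X]) :
    (X - C (X : ℝ[X])) * bezoutian F G = - NN F G := by
  have h := NN_eq F G
  rw [bez_eq]
  linear_combination h

noncomputable def swap : Polynomial ℝ[X] →+* Polynomial ℝ[X] :=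
  eval₂RingHom (mapRingHom (C : ℝ →+* ℝ[X])) (C X)

lemma swap_coeff (P : Polynomial ℝ[X]) (i j : ℕ) :
    ((swap P).coeff j).coeff i = (P.coeff i).coeff j := by
  induction P using Polynomial.induction_on' with
  | add p q hp hq => simp [map_add, coeff_add, hp, hq]
  | monomial n a =>
      rw [swap, coe_eval₂RingHom, eval₂_monomial, Polynomial.coe_mapRingHom]
      rw [← Polynomial.C_pow, coeff_mul_C, coeff_map, coeff_C_mul, coeff_X_pow,
        coeff_monomial]
      split_ifs with h h2 <;> simp_all

lemma swap_C (p : ℝ[X]) : swap (C p) = p.map C := by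
  simp [swap, eval₂_C]

lemma swap_mapC (p : ℝ[X]) : swap (p.map C) = C p := by
  rw [swap, coe_eval₂RingHom, eval₂_map]
  have hcomp : (mapRingHom (C : ℝ →+* ℝ[X])).comp (C : ℝ →+* ℝ[X])
      = (C : ℝ[X] →+* Polynomial ℝ[X]).comp (C : ℝ →+* ℝ[X]) := by
    ext r
    simp
  rw [hcomp, ← hom_eval₂ p (C : ℝ →+* ℝ[X]) (C : ℝ[X] →+* Polynomial ℝ[X]) X,
    eval₂_C_X]

lemma swap_X_sub : swap (X - C (X : ℝ[X])) = -(X - C X) := by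
  rw [map_sub, swap_C, map_X]
  simp [swap, eval₂_X]


lemma swap_NN (F G : ℝ[X]) : swap (NN F G) = - NN F G := by
  simp only [NN, map_sub, map_mul, swap_C, swap_mapC]
  ring

lemma XsubC_ne : (X - C (X : ℝ[X])) ≠ 0 := X_sub_C_ne_zero _

lemma swap_bez (F G : ℝ[X]) : swap (bezoutian F G) = bezoutian F G := by
  have h1 := bez_mul F G
  have h2 := congrArg swap h1
  rw [map_mul, swap_X_sub, map_neg, swap_NN, neg_neg] at h2
  have h3 : (X - C (X : ℝ[X])) * swap (bezoutian F G)
      = (X - C X) * bezoutian F G := by linear_combination -h2 - h1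
  exact mul_left_cancel₀ XsubC_ne h3

lemma natDegree_NN_le {m : ℕ} (F G : ℝ[X]) (hF : F.natDegree ≤ m)
    (hG : G.natDegree ≤ m) : (NN F G).natDegree ≤ m := by
  refine le_trans (natDegree_sub_le _ _) (max_le ?_ ?_)
  · calc (C F * G.map C).natDegree ≤ (C F).natDegree + (G.map C).natDegree :=
        natDegree_mul_le
      _ ≤ 0 + G.natDegree := add_le_add (le_of_eq (natDegree_C _)) natDegree_map_le
      _ ≤ m := by simpa using hG
  · calc (F.map C * C G).natDegree ≤ (F.map C).natDegree + (C G).natDegree :=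
        natDegree_mul_le
      _ ≤ F.natDegree + 0 := add_le_add natDegree_map_le (le_of_eq (natDegree_C _))
      _ ≤ m := by simpa using hF

lemma coeff_bez_outer {m : ℕ} (F G : ℝ[X]) (hm : 1 ≤ m) (hF : F.natDegree ≤ m)
    (hG : G.natDegree ≤ m) {j : ℕ} (hj : m ≤ j) : (bezoutian F G).coeff j = 0 := by
  rw [bez_eq, coeff_neg]
  have h1 : (NN F G /ₘ (X - C X)).natDegree ≤ m - 1 := by
    rw [natDegree_divByMonic _ monicYX, natDegree_X_sub_C]
    have := natDegree_NN_le F G hF hG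
    omega
  rw [coeff_eq_zero_of_natDegree_lt (lt_of_le_of_lt h1 (by omega)), neg_zero]

lemma coeff_bez_inner {m : ℕ} (F G : ℝ[X]) (hm : 1 ≤ m) (hF : F.natDegree ≤ m)
    (hG : G.natDegree ≤ m) {i : ℕ} (j : ℕ) (hi : m ≤ i) :
    ((bezoutian F G).coeff j).coeff i = 0 := by
  have hsymm : ((bezoutian F G).coeff j).coeff i
      = ((bezoutian F G).coeff i).coeff j := by
    conv_lhs => rw [← swap_bez F G]
    exact swap_coeff _ i j
  rw [hsymm, coeff_bez_outer F G hm hF hG hi, coeff_zero]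

lemma natDegree_coeff_bez_lt {m : ℕ} (F G : ℝ[X]) (hm : 1 ≤ m)
    (hF : F.natDegree ≤ m) (hG : G.natDegree ≤ m) (j : ℕ) :
    ((bezoutian F G).coeff j).natDegree < m := by
  by_cases h : (bezoutian F G).coeff j = 0
  · simp [h]; omega
  · rw [natDegree_lt_iff_degree_lt h]
    exact (degree_lt_iff_coeff_zero _ _).mpr fun k hk =>
      coeff_bez_inner F G hm hF hG j (by exact_mod_cast hk)


lemma det_eq_zero_of_not_coprime (m : ℕ) (F G : ℝ[X]) (hm : 1 ≤ m)
    (hF : F.natDegree = m) (hG : G.natDegree ≤ m) (hnc : ¬ IsCoprime F G) :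
    (bezMat m F G).det = 0 := by
  classical
  have hF0 : F ≠ 0 := by intro h; rw [h, natDegree_zero] at hF; omega
  set d := EuclideanDomain.gcd F G with hd
  have hdu : ¬ IsUnit d := fun h => hnc (EuclideanDomain.gcd_isUnit_iff.mp h)
  have hd0 : d ≠ 0 := by
    intro h
    exact hF0 ((EuclideanDomain.gcd_eq_zero_iff.mp h).1)
  have hdeg : 0 < d.natDegree := by
    rcases Nat.eq_zero_or_pos d.natDegree with h | h
    · exact absurd (by
        rw [Polynomial.eq_C_of_natDegree_eq_zero h]
        exact isUnit_C.mpr (isUnit_iff_ne_zero.mpr (by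
          intro hc
          apply hd0
          rw [Polynomial.eq_C_of_natDegree_eq_zero h, hc, map_zero]))) hdu
    · exact h
  have hdegC : 0 < (d.map (algebraMap ℝ ℂ)).degree := by
    rw [degree_map_eq_of_injective (algebraMap ℝ ℂ).injective]
    exact natDegree_pos_iff_degree_pos.mp hdeg
  obtain ⟨α, hα⟩ := Complex.exists_root hdegC
  have hdα : aeval α d = 0 := by
    rwa [aeval_def, ← eval_map]
  have hFα : aeval α F = 0 := by
    obtain ⟨e, he⟩ := EuclideanDomain.gcd_dvd_left F G
    rw [← hd] at he
    rw [he, map_mul, hdα, zero_mul]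
  have hGα : aeval α G = 0 := by
    obtain ⟨e, he⟩ := EuclideanDomain.gcd_dvd_right F G
    rw [← hd] at he
    rw [he, map_mul, hdα, zero_mul]
  set φ : ℝ[X] →+* ℂ := (aeval α : ℝ[X] →ₐ[ℝ] ℂ).toRingHom with hφ
  have hφF : φ F = 0 := hFα
  have hφG : φ G = 0 := hGα
  have hNmap : (NN F G).map φ = 0 := by
    rw [NN, Polynomial.map_sub, Polynomial.map_mul, Polynomial.map_mul,
      map_C, map_C, hφF, hφG]
    simp
  have hquot : ((NN F G /ₘ (X - C X)).map φ) = 0 := by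
    have h := congrArg (Polynomial.map φ) (NN_eq F G)
    rw [hNmap, Polynomial.map_mul, Polynomial.map_sub, map_X, map_C] at h
    have hX : (X - C (φ X) : ℂ[X]) ≠ 0 := X_sub_C_ne_zero _
    rcases mul_eq_zero.mp h.symm with h' | h'
    · exact absurd h' hX
    · exact h'
  have hbezc : ∀ j : ℕ, φ ((bezoutian F G).coeff j) = 0 := by
    intro j
    have : (bezoutian F G).map φ = 0 := by
      rw [bez_eq, Polynomial.map_neg, hquot, neg_zero]
    have := congrArg (fun p => Polynomial.coeff p j) this
    simpa [coeff_map] using this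
  set Mc : Matrix (Fin m) (Fin m) ℂ := (bezMat m F G).map (algebraMap ℝ ℂ) with hMc
  set w : Fin m → ℂ := fun i => α ^ (i : ℕ) with hw
  have hw0 : w ≠ 0 := by
    intro h
    have := congrFun h ⟨0, hm⟩
    simp [hw] at this
  have hker : Matrix.vecMul w Mc = 0 := by
    funext j
    have hna : ((bezoutian F G).coeff (j : ℕ)).natDegree < m :=
      natDegree_coeff_bez_lt F G hm (le_of_eq hF) hG _
    have hsum := aeval_eq_sum_range' hna α
    have : Matrix.vecMul w Mc j
        = ∑ i ∈ Finset.range m, ((bezoutian F G).coeff (j : ℕ)).coeff i • α ^ i := by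
      rw [← Fin.sum_univ_eq_sum_range
        (fun i => ((bezoutian F G).coeff (j : ℕ)).coeff i • α ^ i) m]
      simp only [Matrix.vecMul, dotProduct, hMc, Matrix.map_apply, bezMat,
        Algebra.smul_def, hw]
      refine Finset.sum_congr rfl fun i _ => ?_
      ring
    rw [this, ← hsum]
    exact hbezc _
  have hdetC : Mc.det = 0 := Matrix.exists_vecMul_eq_zero_iff.mp ⟨w, hw0, hker⟩
  have : algebraMap ℝ ℂ (bezMat m F G).det = 0 := by
    rw [RingHom.map_det]
    rw [show (algebraMap ℝ ℂ).mapMatrix (bezMat m F G) = Mc from rfl]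
    exact hdetC
  exact (map_eq_zero_iff _ (algebraMap ℝ ℂ).injective).mp this

lemma det_ne_zero_of_coprime (m : ℕ) (F G : ℝ[X]) (hm : 1 ≤ m)
    (hF : F.natDegree = m) (hG : G.natDegree ≤ m) (hco : IsCoprime F G) :
    (bezMat m F G).det ≠ 0 := by
  classical
  intro hdet
  have hF0 : F ≠ 0 := by intro h; rw [h, natDegree_zero] at hF; omega
  obtain ⟨v, hv0, hv⟩ := Matrix.exists_mulVec_eq_zero_iff.mpr hdet
  set Vt : ℝ[X] := ∑ j : Fin m, C (v j) * X ^ (m - 1 - (j : ℕ)) with hVt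
  -- coefficients of Vt
  have hVtc : ∀ a : ℕ, (ha : a < m) → Vt.coeff (m - 1 - a) = v ⟨a, ha⟩ := by
    intro a ha
    rw [hVt, finset_sum_coeff]
    rw [Finset.sum_eq_single (⟨a, ha⟩ : Fin m)]
    · simp
    · intro j _ hj
      have hja : (j : ℕ) ≠ a := by
        intro h; exact hj (Fin.ext h)
      rw [coeff_C_mul, coeff_X_pow, if_neg (by omega), mul_zero]
    · intro h; exact absurd (Finset.mem_univ _) h
  have hVtz : ∀ b : ℕ, m ≤ b → Vt.coeff b = 0 := by
    intro b hb
    rw [hVt, finset_sum_coeff]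
    apply Finset.sum_eq_zero
    intro j _
    rw [coeff_C_mul, coeff_X_pow, if_neg (by omega), mul_zero]
  have hVt0 : Vt ≠ 0 := by
    obtain ⟨j, hj⟩ := Function.ne_iff.mp hv0
    intro h
    apply hj
    have h2 := hVtc (j : ℕ) j.2
    rw [h, coeff_zero] at h2
    simpa using h2.symm
  have hVtdeg : Vt.natDegree < m := by
    rw [natDegree_lt_iff_degree_lt hVt0]
    exact (degree_lt_iff_coeff_zero _ _).mpr fun k hk => hVtz k (by exact_mod_cast hk)
  -- Delta
  set W : Polynomial ℝ[X] := bezoutian F G * Vt.map C with hW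
  have hDelta : W.coeff (m - 1) = 0 := by
    rw [hW, coeff_mul,
      Finset.Nat.sum_antidiagonal_eq_sum_range_succ
        (fun a b => (bezoutian F G).coeff a * (Vt.map C).coeff b),
      show (m - 1).succ = m by omega]
    refine Polynomial.ext fun i => ?_
    rw [finset_sum_coeff, coeff_zero]
    by_cases him : i < m
    · have hvi := congrFun hv ⟨i, him⟩
      rw [Matrix.mulVec, dotProduct] at hvi
      simp only [Pi.zero_apply] at hvi
      rw [← Fin.sum_univ_eq_sum_range
        (fun a => ((bezoutian F G).coeff a * (Vt.map C).coeff (m - 1 - a)).coeff i) m]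
      rw [← hvi]
      refine Finset.sum_congr rfl fun a _ => ?_
      rw [coeff_map, coeff_mul_C, hVtc (a : ℕ) a.2, Fin.eta]
      rfl
    · apply Finset.sum_eq_zero
      intro a _
      rw [coeff_map, coeff_mul_C,
        coeff_bez_inner F G hm (le_of_eq hF) hG a (by omega), zero_mul]
  -- decompositions
  have hXm : ((X : Polynomial ℝ[X]) ^ m).Monic := monic_X_pow m
  set Wq := W /ₘ (X ^ m) with hWq
  set Wr := W %ₘ (X ^ m) with hWr
  have hWdec : Wr + X ^ m * Wq = W := modByMonic_add_div W (X ^ m)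
  have hWrdeg : Wr.degree < ((X : Polynomial ℝ[X]) ^ m).degree :=
    degree_modByMonic_lt W hXm
  have hWrdeg' : Wr.degree < (m : WithBot ℕ) := by
    rwa [degree_X_pow] at hWrdeg
  have hWrc : Wr.coeff (m - 1) = 0 := by
    have h1 : Wr.coeff (m-1) + (X ^ m * Wq).coeff (m-1) = W.coeff (m-1) := by
      rw [← coeff_add, hWdec]
    rw [hDelta, mul_comm, coeff_mul_X_pow', if_neg (by omega)] at h1
    simpa using h1
  have h_low : ((X - C X) * Wr).degree < ((X : Polynomial ℝ[X]) ^ m).degree := by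
    rw [degree_X_pow]
    refine (degree_lt_iff_coeff_zero _ _).mpr fun k hk => ?_
    have hk' : m ≤ k := by exact_mod_cast hk
    rw [sub_mul, coeff_sub]
    have e1 : ((X : Polynomial ℝ[X]) * Wr).coeff k = Wr.coeff (k - 1) := by
      have := coeff_X_mul Wr (k - 1)
      rwa [show k - 1 + 1 = k by omega] at this
    have e2 : Wr.coeff k = 0 := by
      apply coeff_eq_zero_of_degree_lt
      exact lt_of_lt_of_le hWrdeg' (by exact_mod_cast hk)
    have e3 : Wr.coeff (k - 1) = 0 := by
      rcases eq_or_lt_of_le hk' with h | h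
      · rw [← h]; exact hWrc
      · apply coeff_eq_zero_of_degree_lt
        refine lt_of_lt_of_le hWrdeg' ?_
        exact_mod_cast (by omega : m ≤ k - 1)
    rw [e1, e3, coeff_C_mul, e2, mul_zero, sub_zero]
  -- main identity
  have I1 : (X - C X) * W
      = C G * (F * Vt).map C - C F * (G * Vt).map C := by
    have hb := bez_mul F G
    rw [NN] at hb
    rw [hW, Polynomial.map_mul, Polynomial.map_mul]
    linear_combination (Vt.map (C : ℝ →+* ℝ[X])) * hb
  set qF := (F * Vt) /ₘ (X ^ m) with hqF
  set rF := (F * Vt) %ₘ (X ^ m) with hrF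
  set qG := (G * Vt) /ₘ (X ^ m) with hqG
  set rG := (G * Vt) %ₘ (X ^ m) with hrG
  have hFdec : rF + X ^ m * qF = F * Vt := modByMonic_add_div _ (X ^ m)
  have hGdec : rG + X ^ m * qG = G * Vt := modByMonic_add_div _ (X ^ m)
  have hFdec' : rF.map (C : ℝ →+* ℝ[X]) + (X : Polynomial ℝ[X]) ^ m * qF.map C
      = (F * Vt).map C := by
    have := congrArg (Polynomial.map (C : ℝ →+* ℝ[X])) hFdec
    simpa [Polynomial.map_add, Polynomial.map_mul, Polynomial.map_pow] using this
  have hGdec' : rG.map (C : ℝ →+* ℝ[X]) + (X : Polynomial ℝ[X]) ^ m * qG.map C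
      = (G * Vt).map C := by
    have := congrArg (Polynomial.map (C : ℝ →+* ℝ[X])) hGdec
    simpa [Polynomial.map_add, Polynomial.map_mul, Polynomial.map_pow] using this
  have hdegC : ∀ (a : ℝ[X]) (p : Polynomial ℝ[X]), (C a * p).degree ≤ p.degree := by
    intro a p
    calc (C a * p).degree ≤ (C a).degree + p.degree := degree_mul_le _ _
      _ ≤ 0 + p.degree := add_le_add degree_C_le le_rfl
      _ = p.degree := zero_add _
  have hrFdeg : (rF.map (C : ℝ →+* ℝ[X])).degree < (m : WithBot ℕ) := by
    refine lt_of_le_of_lt (degree_map_le) ?_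
    have := degree_modByMonic_lt (F * Vt) (monic_X_pow (R := ℝ) m)
    rwa [degree_X_pow] at this
  have hrGdeg : (rG.map (C : ℝ →+* ℝ[X])).degree < (m : WithBot ℕ) := by
    refine lt_of_le_of_lt (degree_map_le) ?_
    have := degree_modByMonic_lt (G * Vt) (monic_X_pow (R := ℝ) m)
    rwa [degree_X_pow] at this
  have h_lowR : (C G * rF.map (C : ℝ →+* ℝ[X]) - C F * rG.map C).degree
      < ((X : Polynomial ℝ[X]) ^ m).degree := by
    rw [degree_X_pow]
    refine lt_of_le_of_lt (degree_sub_le _ _) (max_lt ?_ ?_)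
    · exact lt_of_le_of_lt (hdegC _ _) hrFdeg
    · exact lt_of_le_of_lt (hdegC _ _) hrGdeg
  have h1 := div_modByMonic_unique (f := (X - C X) * W)
      ((X - C X) * Wq) ((X - C X) * Wr) hXm
      ⟨by linear_combination (X - C (X : ℝ[X])) * hWdec, h_low⟩
  have h2 := div_modByMonic_unique (f := (X - C X) * W)
      (C G * qF.map (C : ℝ →+* ℝ[X]) - C F * qG.map C)
      (C G * rF.map (C : ℝ →+* ℝ[X]) - C F * rG.map C) hXm
      ⟨by linear_combination C G * hFdec' - C F * hGdec' - I1, h_lowR⟩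
  have key : (X - C X) * Wq
      = C G * qF.map (C : ℝ →+* ℝ[X]) - C F * qG.map C := h1.1.symm.trans h2.1
  have heval := congrArg (Polynomial.eval (X : ℝ[X])) key
  rw [eval_mul, eval_sub, eval_X, eval_C, sub_self, zero_mul, eval_sub,
    eval_mul, eval_mul, eval_C, eval_C, eval_map, eval₂_C_X, eval_map,
    eval₂_C_X] at heval
  -- 0 = G * qF - F * qG
  have hdvd : F ∣ G * qF := ⟨qG, by linear_combination -heval⟩
  have hdvd2 : F ∣ qF := hco.dvd_of_dvd_mul_left hdvd
  have hqF0 : qF ≠ 0 := by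
    intro h
    have hFVt : F * Vt = rF := by rw [← hFdec, h, mul_zero, add_zero]
    have hFVt0 : F * Vt ≠ 0 := mul_ne_zero hF0 hVt0
    have hdeg2 : (F * Vt).degree < (m : WithBot ℕ) := by
      rw [hFVt, hrF]
      have := degree_modByMonic_lt (F * Vt) (monic_X_pow (R := ℝ) m)
      rwa [degree_X_pow] at this
    have h3 : (F * Vt).natDegree < m := (natDegree_lt_iff_degree_lt hFVt0).mpr hdeg2
    rw [natDegree_mul hF0 hVt0, hF] at h3; omega
  have hqFdeg : qF.degree < F.degree := by
    have h1 : qF.natDegree = Vt.natDegree := by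
      rw [hqF, natDegree_divByMonic _ (monic_X_pow m), natDegree_mul hF0 hVt0, hF,
        natDegree_X_pow]
      omega
    rw [degree_eq_natDegree hqF0, degree_eq_natDegree hF0, hF, h1]
    exact_mod_cast hVtdeg
  exact hqF0 (eq_zero_of_dvd_of_degree_lt hdvd2 hqFdeg)

end BezAux

theorem isCoprime_iff_bezMat_det_ne_zero (m : ℕ) (F G : ℝ[X])
    (hm : 1 ≤ m) (hF : F.natDegree = m) (hG : G.natDegree ≤ m) (hG0 : G ≠ 0) :
    IsCoprime F G ↔ (bezMat m F G).det ≠ 0 := by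
  constructor
  · exact fun hco => BezAux.det_ne_zero_of_coprime m F G hm hF hG hco
  · intro hdet
    by_contra hnc
    exact hdet (BezAux.det_eq_zero_of_not_coprime m F G hm hF hG hnc)
end

section
/- The rank of the stacked Bézout matrix equals m minus the degree of the gcd: with F_1, ..., F_n real polynomials of degree at most m, deg F_1 = m, and d = deg(gcd(F_1,...,F_n)), the matrix Bez(F_1,...,F_n) has rank m - d. -/
open Polynomial

/-- The stacked Bézout matrix of `F₁` and `Fs 0, …, Fs (k-1)`:
the vertical stack of `Bez(F₁, Fs i)`. -/
noncomputable def bezStack (m k : ℕ) (F₁ : ℝ[X]) (Fs : Fin k → ℝ[X]) :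
    Matrix (Fin k × Fin m) (Fin m) ℝ :=
  fun p j => bezMat m F₁ (Fs p.1) p.2 j

namespace BezAux

/-- iterated `divX`: drop the `k` lowest coefficients. -/
noncomputable def dk (k : ℕ) (A : ℝ[X]) : ℝ[X] := Polynomial.divX^[k] A

/-- truncation: the part of `A` of degree `< k`. -/
noncomputable def tr (k : ℕ) (A : ℝ[X]) : ℝ[X] := A - dk k A * X ^ k

lemma dk_coeff (k : ℕ) (A : ℝ[X]) (i : ℕ) : (dk k A).coeff i = A.coeff (i + k) := by
  induction k generalizing i with
  | zero => simp [dk]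
  | succ k ih =>
    have : dk (k+1) A = (dk k A).divX := by
      simp [dk, Function.iterate_succ_apply']
    rw [this, coeff_divX, ih]
    ring_nf

lemma dk_linear (k : ℕ) (A B : ℝ[X]) : dk k (A + B) = dk k A + dk k B := by
  ext i; simp [dk_coeff]

lemma dk_succ (k : ℕ) (A : ℝ[X]) :
    dk k A = X * dk (k+1) A + C (A.coeff k) := by
  have h1 : dk (k+1) A = (dk k A).divX := by
    simp [dk, Function.iterate_succ_apply']
  have h2 : (dk k A).coeff 0 = A.coeff k := by simp [dk_coeff]
  rw [h1, ← h2, X_mul_divX_add]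

lemma dk_eq_C (m : ℕ) (A : ℝ[X]) (hA : A.natDegree ≤ m) : dk m A = C (A.coeff m) := by
  ext i
  rcases Nat.eq_zero_or_pos i with h | h
  · simp [h, dk_coeff]
  · rw [dk_coeff, coeff_C, if_neg (by omega)]
    exact coeff_eq_zero_of_natDegree_lt (by omega)

lemma tr_add_dk (k : ℕ) (A : ℝ[X]) : tr k A + dk k A * X ^ k = A := by simp [tr]

lemma tr_coeff (k : ℕ) (A : ℝ[X]) (i : ℕ) :
    (tr k A).coeff i = if i < k then A.coeff i else 0 := by
  rw [tr, coeff_sub, coeff_mul_X_pow']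
  split_ifs with h1 h2 h2
  · omega
  · rw [dk_coeff]
    rw [Nat.sub_add_cancel h1]
    ring
  · simp
  · omega


lemma tr_natDegree_le (k : ℕ) (A : ℝ[X]) : (tr (k+1) A).natDegree ≤ k := by
  rw [natDegree_le_iff_coeff_eq_zero]
  intro N hN
  rw [tr_coeff, if_neg (by omega)]

/-- the `j`-th outer coefficient of the Bézoutian. -/
noncomputable def t (j : ℕ) (F G : ℝ[X]) : ℝ[X] := G * dk (j+1) F - F * dk (j+1) G

/-- base identity: `X^(j+1) * t j F G = F * tr (j+1) G - G * tr (j+1) F`. -/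
lemma Xpow_mul_t (j : ℕ) (F G : ℝ[X]) :
    X ^ (j+1) * t j F G = F * tr (j+1) G - G * tr (j+1) F := by
  have hF := tr_add_dk (j+1) F
  have hG := tr_add_dk (j+1) G
  rw [t]
  linear_combination G * hF - F * hG

lemma t_natDegree_le (m : ℕ) (j : ℕ) (F G : ℝ[X]) (hF : F.natDegree ≤ m)
    (hG : G.natDegree ≤ m) (hm : 0 < m) : (t j F G).natDegree ≤ m - 1 := by
  by_cases ht : t j F G = 0
  · simp [ht]
  have h1 : (X ^ (j+1) * t j F G).natDegree = (j+1) + (t j F G).natDegree := by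
    rw [natDegree_mul (pow_ne_zero _ X_ne_zero) ht, natDegree_X_pow]
  have h2 : (F * tr (j+1) G - G * tr (j+1) F).natDegree ≤ m + j := by
    apply le_trans (natDegree_sub_le _ _)
    apply max_le
    · exact le_trans (natDegree_mul_le) (by
        have := tr_natDegree_le j G
        omega)
    · exact le_trans (natDegree_mul_le) (by
        have := tr_natDegree_le j F
        omega)
  rw [Xpow_mul_t] at h1
  omega


lemma P_coeff (m : ℕ) (F G : ℝ[X]) (n : ℕ) :
    (∑ j ∈ Finset.range m, Polynomial.C (t j F G) * Polynomial.X ^ j).coeff n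
      = if n < m then t n F G else 0 := by
  rw [finset_sum_coeff]
  simp only [C_mul_X_pow_eq_monomial, coeff_monomial]
  rw [Finset.sum_ite_eq' (Finset.range m) n]
  simp [Finset.mem_range]

lemma dk_zero (A : ℝ[X]) : dk 0 A = A := rfl

lemma bez_defining (F G : ℝ[X]) :
    (Polynomial.C Polynomial.X - Polynomial.X) * bezoutian F G
      = Polynomial.C F * G.map Polynomial.C - F.map Polynomial.C * Polynomial.C G := by
  set N : Polynomial ℝ[X] :=
    Polynomial.C F * G.map Polynomial.C - F.map Polynomial.C * Polynomial.C G with hN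
  have hmonic : (Polynomial.X - Polynomial.C Polynomial.X : Polynomial ℝ[X]).Monic :=
    monic_X_sub_C _
  have hmod : N %ₘ (Polynomial.X - Polynomial.C Polynomial.X) = 0 := by
    rw [modByMonic_X_sub_C_eq_C_eval]
    have : Polynomial.eval Polynomial.X N = 0 := by
      simp [hN, eval_map, eval₂_C_X, mul_comm]
    rw [this, map_zero]
  have hdiv := modByMonic_add_div N (Polynomial.X - Polynomial.C Polynomial.X)
  rw [hmod, zero_add] at hdiv
  rw [bezoutian, ← hN]
  linear_combination hdiv

lemma bez_eq_s10 (m : ℕ) (F G : ℝ[X]) (hF : F.natDegree ≤ m) (hG : G.natDegree ≤ m)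
    (hm : 0 < m) :
    bezoutian F G = ∑ j ∈ Finset.range m, Polynomial.C (t j F G) * Polynomial.X ^ j := by
  set P : Polynomial ℝ[X] :=
    ∑ j ∈ Finset.range m, Polynomial.C (t j F G) * Polynomial.X ^ j with hP
  have hne : (Polynomial.C Polynomial.X - Polynomial.X : Polynomial ℝ[X]) ≠ 0 := by
    have h2 := (monic_X_sub_C (Polynomial.X : ℝ[X])).ne_zero
    intro h
    apply h2
    have h3 : (Polynomial.X - Polynomial.C Polynomial.X : Polynomial ℝ[X])
        = -(Polynomial.C Polynomial.X - Polynomial.X) := by ring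
    rw [h3, h, neg_zero]
  apply mul_left_cancel₀ hne
  rw [bez_defining]
  refine Polynomial.ext fun n => ?_
  have hco : ((Polynomial.C Polynomial.X - Polynomial.X) * P).coeff n
      = Polynomial.X * P.coeff n - (Polynomial.X * P).coeff n := by
    rw [sub_mul, coeff_sub, coeff_C_mul]
  have hrhs : (Polynomial.C F * G.map Polynomial.C
      - F.map Polynomial.C * Polynomial.C G).coeff n
      = F * Polynomial.C (G.coeff n) - Polynomial.C (F.coeff n) * G := by
    rw [coeff_sub, coeff_C_mul, coeff_map]
    have h4 : (F.map Polynomial.C * Polynomial.C G).coeff n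
        = Polynomial.C (F.coeff n) * G := by
      rw [mul_comm, coeff_C_mul, coeff_map, mul_comm]
    rw [h4]
  rw [hco, hrhs]
  symm
  rcases n with _ | n
  · -- n = 0
    rw [Polynomial.mul_coeff_zero, Polynomial.coeff_X_zero, zero_mul, sub_zero]
    rw [hP, P_coeff, if_pos hm]
    have e1 : Polynomial.X * dk 1 F = F - Polynomial.C (F.coeff 0) := by
      have h := (dk_succ 0 F).symm
      rw [dk_zero] at h
      exact eq_sub_of_add_eq h
    have e2 : Polynomial.X * dk 1 G = G - Polynomial.C (G.coeff 0) := by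
      have h := (dk_succ 0 G).symm
      rw [dk_zero] at h
      exact eq_sub_of_add_eq h
    calc Polynomial.X * t 0 F G
        = G * (Polynomial.X * dk 1 F) - F * (Polynomial.X * dk 1 G) := by rw [t]; ring
      _ = G * (F - Polynomial.C (F.coeff 0)) - F * (G - Polynomial.C (G.coeff 0)) := by
          rw [e1, e2]
      _ = F * Polynomial.C (G.coeff 0) - Polynomial.C (F.coeff 0) * G := by ring
  · -- n = n+1
    rw [Polynomial.coeff_X_mul, hP, P_coeff, P_coeff]
    rcases lt_trichotomy (n+1) m with h | h | h
    · rw [if_pos h, if_pos (by omega)]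
      have e1 : Polynomial.X * dk (n+2) F = dk (n+1) F - Polynomial.C (F.coeff (n+1)) :=
        eq_sub_of_add_eq (dk_succ (n+1) F).symm
      have e2 : Polynomial.X * dk (n+2) G = dk (n+1) G - Polynomial.C (G.coeff (n+1)) :=
        eq_sub_of_add_eq (dk_succ (n+1) G).symm
      calc Polynomial.X * t (n+1) F G - t n F G
          = (G * (Polynomial.X * dk (n+2) F) - F * (Polynomial.X * dk (n+2) G))
              - t n F G := by rw [t]; ring
        _ = (G * (dk (n+1) F - Polynomial.C (F.coeff (n+1)))
              - F * (dk (n+1) G - Polynomial.C (G.coeff (n+1)))) - t n F G := by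
            rw [e1, e2]
        _ = F * Polynomial.C (G.coeff (n+1)) - Polynomial.C (F.coeff (n+1)) * G := by
            rw [t]; ring
    · rw [if_neg (by omega), if_pos (by omega), mul_zero, zero_sub, t]
      have hFm : dk (n+1) F = Polynomial.C (F.coeff (n+1)) := dk_eq_C _ _ (by omega)
      have hGm : dk (n+1) G = Polynomial.C (G.coeff (n+1)) := dk_eq_C _ _ (by omega)
      rw [hFm, hGm]
      ring
    · rw [if_neg (by omega), if_neg (by omega)]
      have h1 : F.coeff (n+1) = 0 := coeff_eq_zero_of_natDegree_lt (by omega)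
      have h2 : G.coeff (n+1) = 0 := coeff_eq_zero_of_natDegree_lt (by omega)
      rw [h1, h2]
      simp


/-- the polynomial with reversed coefficients of `v`. -/
noncomputable def rv (m : ℕ) (v : Fin m → ℝ) : ℝ[X] :=
  ∑ j : Fin m, Polynomial.C (v j) * Polynomial.X ^ (m - 1 - (j:ℕ))

noncomputable def Sv (m : ℕ) (F G : ℝ[X]) (v : Fin m → ℝ) : ℝ[X] :=
  ∑ j : Fin m, Polynomial.C (v j) * t (j:ℕ) F G

noncomputable def Av (m : ℕ) (F : ℝ[X]) (v : Fin m → ℝ) : ℝ[X] :=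
  ∑ j : Fin m, Polynomial.C (v j) * (tr ((j:ℕ)+1) F * Polynomial.X ^ (m - 1 - (j:ℕ)))

noncomputable def Hv (m : ℕ) (F : ℝ[X]) (v : Fin m → ℝ) : ℝ[X] :=
  ∑ j : Fin m, Polynomial.C (v j) * dk ((j:ℕ)+1) F

lemma Fr_eq (m : ℕ) (F : ℝ[X]) (v : Fin m → ℝ) :
    F * rv m v = Polynomial.X ^ m * Hv m F v + Av m F v := by
  rw [rv, Hv, Av, Finset.mul_sum, Finset.mul_sum, ← Finset.sum_add_distrib]
  apply Finset.sum_congr rfl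
  intro j _
  have hj : (j:ℕ) < m := j.isLt
  have hpow : (Polynomial.X:ℝ[X]) ^ ((j:ℕ)+1) * Polynomial.X ^ (m - 1 - (j:ℕ))
      = Polynomial.X ^ m := by
    rw [← pow_add]; congr 1; omega
  calc F * (Polynomial.C (v j) * Polynomial.X ^ (m - 1 - (j:ℕ)))
      = (tr ((j:ℕ)+1) F + dk ((j:ℕ)+1) F * Polynomial.X ^ ((j:ℕ)+1))
          * (Polynomial.C (v j) * Polynomial.X ^ (m - 1 - (j:ℕ))) := by rw [tr_add_dk]
    _ = (Polynomial.C (v j) * dk ((j:ℕ)+1) F)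
          * (Polynomial.X ^ ((j:ℕ)+1) * Polynomial.X ^ (m - 1 - (j:ℕ)))
        + Polynomial.C (v j) * (tr ((j:ℕ)+1) F * Polynomial.X ^ (m - 1 - (j:ℕ))) := by
        ring
    _ = Polynomial.X ^ m * (Polynomial.C (v j) * dk ((j:ℕ)+1) F)
        + Polynomial.C (v j) * (tr ((j:ℕ)+1) F * Polynomial.X ^ (m - 1 - (j:ℕ))) := by
        rw [hpow]; ring

lemma XmSv (m : ℕ) (F G : ℝ[X]) (v : Fin m → ℝ) :
    Polynomial.X ^ m * Sv m F G v = F * Av m G v - G * Av m F v := by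
  rw [Sv, Av, Av, Finset.mul_sum, Finset.mul_sum, Finset.mul_sum, ← Finset.sum_sub_distrib]
  apply Finset.sum_congr rfl
  intro j _
  have hj : (j:ℕ) < m := j.isLt
  have hpow : (Polynomial.X:ℝ[X]) ^ (m - 1 - (j:ℕ)) * Polynomial.X ^ ((j:ℕ)+1)
      = Polynomial.X ^ m := by
    rw [← pow_add]; congr 1; omega
  have hkey := Xpow_mul_t (j:ℕ) F G
  calc Polynomial.X ^ m * (Polynomial.C (v j) * t (j:ℕ) F G)
      = Polynomial.C (v j) * (Polynomial.X ^ (m - 1 - (j:ℕ))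
          * (Polynomial.X ^ ((j:ℕ)+1) * t (j:ℕ) F G)) := by
        rw [← mul_assoc, ← hpow]; ring
    _ = Polynomial.C (v j) * (Polynomial.X ^ (m - 1 - (j:ℕ))
          * (F * tr ((j:ℕ)+1) G - G * tr ((j:ℕ)+1) F)) := by rw [hkey]
    _ = F * (Polynomial.C (v j) * (tr ((j:ℕ)+1) G * Polynomial.X ^ (m - 1 - (j:ℕ))))
        - G * (Polynomial.C (v j) * (tr ((j:ℕ)+1) F * Polynomial.X ^ (m - 1 - (j:ℕ)))) := by
        ring

lemma Av_natDegree (m : ℕ) (F : ℝ[X]) (v : Fin m → ℝ) :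
    (Av m F v).natDegree ≤ m - 1 := by
  apply Polynomial.natDegree_sum_le_of_forall_le
  intro j _
  have hj : (j:ℕ) < m := j.isLt
  refine le_trans natDegree_mul_le ?_
  have h1 : (Polynomial.C (v j)).natDegree = 0 := natDegree_C _
  have h2 : (tr ((j:ℕ)+1) F * Polynomial.X ^ (m - 1 - (j:ℕ))).natDegree
      ≤ (j:ℕ) + (m - 1 - (j:ℕ)) := by
    refine le_trans natDegree_mul_le ?_
    have := tr_natDegree_le (j:ℕ) F
    have h3 : (Polynomial.X ^ (m - 1 - (j:ℕ)) : ℝ[X]).natDegree = m - 1 - (j:ℕ) :=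
      natDegree_X_pow _
    omega
  omega

lemma Sv_natDegree (m : ℕ) (F G : ℝ[X]) (v : Fin m → ℝ) (hF : F.natDegree ≤ m)
    (hG : G.natDegree ≤ m) (hm : 0 < m) : (Sv m F G v).natDegree ≤ m - 1 := by
  apply Polynomial.natDegree_sum_le_of_forall_le
  intro j _
  refine le_trans natDegree_mul_le ?_
  have h1 : (Polynomial.C (v j)).natDegree = 0 := natDegree_C _
  have h2 := t_natDegree_le m (j:ℕ) F G hF hG hm
  omega

lemma eq_zero_of_Xpow_dvd (m : ℕ) (w : ℝ[X]) (hm : 0 < m)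
    (hdvd : Polynomial.X ^ m ∣ w) (hdeg : w.natDegree ≤ m - 1) : w = 0 := by
  by_contra hw
  have := Polynomial.natDegree_le_of_dvd hdvd hw
  rw [natDegree_X_pow] at this
  omega

lemma finset_gcd_bezout {ι : Type*} [DecidableEq ι] (s : Finset ι) (f : ι → ℝ[X]) :
    ∃ V : ι → ℝ[X], s.gcd f = ∑ i ∈ s, V i * f i := by
  classical
  induction s using Finset.induction_on with
  | empty => exact ⟨0, by simp⟩
  | @insert a s' ha ih =>
    obtain ⟨V, hV⟩ := ih
    obtain ⟨x, y, hxy⟩ := exists_gcd_eq_mul_add_mul (f a) (s'.gcd f)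
    refine ⟨fun i => if i = a then x else y * V i, ?_⟩
    rw [Finset.gcd_insert, hxy, hV, Finset.sum_insert ha]
    have hsum : ∑ i ∈ s', (if i = a then x else y * V i) * f i
        = y * ∑ i ∈ s', V i * f i := by
      rw [Finset.mul_sum]
      apply Finset.sum_congr rfl
      intro i hi
      rw [if_neg (by rintro rfl; exact ha hi)]
      ring
    show f a * x + (∑ i ∈ s', V i * f i) * y
        = (if a = a then x else y * V a) * f a
          + ∑ i ∈ s', (if i = a then x else y * V i) * f i
    rw [hsum, if_pos rfl]
    ring


set_option maxHeartbeats 1000000 in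
lemma kernel_iff (m d n : ℕ) (F : ℝ[X]) (Fs : Fin n → ℝ[X]) (hm : 0 < m)
    (hFdeg : F.natDegree = m) (hFs : ∀ i, (Fs i).natDegree ≤ m)
    (hd : d = (gcd F (Finset.univ.gcd Fs)).natDegree) (v : Fin m → ℝ) :
    (∀ i, Sv m F (Fs i) v = 0) ↔
      ∀ l : Fin (m - d),
        (gcd F (Finset.univ.gcd Fs) * rv m v).coeff (d + (l:ℕ)) = 0 := by
  classical
  set G₀ := Finset.univ.gcd Fs with hG₀
  set g := gcd F G₀ with hg
  have hF0 : F ≠ 0 := by intro h; rw [h, natDegree_zero] at hFdeg; omega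
  have hg0 : g ≠ 0 := by
    intro h
    rw [hg] at h
    exact hF0 ((gcd_eq_zero_iff F G₀).mp h).1
  have hgF : g ∣ F := gcd_dvd_left F G₀
  obtain ⟨F₀, hF₀⟩ := hgF
  have hF₀0 : F₀ ≠ 0 := by rintro rfl; rw [mul_zero] at hF₀; exact hF0 hF₀
  have hdm : d ≤ m := by
    rw [hd, ← hFdeg]
    exact natDegree_le_of_dvd (gcd_dvd_left F G₀) hF0
  have hF₀deg : F₀.natDegree = m - d := by
    have h1 := natDegree_mul hg0 hF₀0
    rw [← hF₀, hFdeg, ← hd] at h1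
    omega
  constructor
  · intro hS l
    obtain ⟨W, hW⟩ := finset_gcd_bezout (Finset.univ : Finset (Fin n)) Fs
    obtain ⟨x, y, hxy⟩ := exists_gcd_eq_mul_add_mul F G₀
    set U := x with hU
    set V : Fin n → ℝ[X] := fun i => y * W i with hV
    have hBez : g = U * F + ∑ i, V i * Fs i := by
      calc g = F * x + G₀ * y := hxy
        _ = F * x + (∑ i, W i * Fs i) * y := by rw [← hW]
        _ = U * F + ∑ i, V i * Fs i := by
            rw [Finset.sum_mul]
            congr 1
            · rw [hU]; ring
            · exact Finset.sum_congr rfl fun i _ => by simp only [hV]; ring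
    have hAB : ∀ i, F * Av m (Fs i) v = Fs i * Av m F v := by
      intro i
      have h := XmSv m F (Fs i) v
      rw [hS i, mul_zero] at h
      exact sub_eq_zero.mp h.symm
    set c : ℝ[X] := U * Av m F v + ∑ i, V i * Av m (Fs i) v with hc
    have hFc : F * c = g * Av m F v := by
      rw [hc, hBez, mul_add, Finset.mul_sum, add_mul, Finset.sum_mul]
      congr 1
      · ring
      · apply Finset.sum_congr rfl
        intro i _
        calc F * (V i * Av m (Fs i) v) = V i * (F * Av m (Fs i) v) := by ring
          _ = V i * (Fs i * Av m F v) := by rw [hAB i]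
          _ = V i * Fs i * Av m F v := by ring
    have hA : Av m F v = F₀ * c := by
      apply mul_left_cancel₀ hg0
      calc g * Av m F v = F * c := hFc.symm
        _ = g * (F₀ * c) := by rw [hF₀]; ring
    have hl : d + (l:ℕ) < m := by have := l.isLt; omega
    have hgr : g * rv m v
        = Polynomial.X ^ m * (U * Hv m F v + ∑ i, V i * Hv m (Fs i) v) + c := by
      calc g * rv m v
          = U * (F * rv m v) + ∑ i, V i * (Fs i * rv m v) := by
            rw [hBez, add_mul, Finset.sum_mul]
            congr 1
            · ring
            · exact Finset.sum_congr rfl fun i _ => by ring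
        _ = U * (Polynomial.X ^ m * Hv m F v + Av m F v)
            + ∑ i, V i * (Polynomial.X ^ m * Hv m (Fs i) v + Av m (Fs i) v) := by
            rw [Fr_eq]
            exact congrArg _ (Finset.sum_congr rfl fun i _ => by rw [Fr_eq])
        _ = (Polynomial.X ^ m * (U * Hv m F v) + U * Av m F v)
            + ∑ i, (Polynomial.X ^ m * (V i * Hv m (Fs i) v) + V i * Av m (Fs i) v) := by
            congr 1
            · ring
            · exact Finset.sum_congr rfl fun i _ => by ring
        _ = Polynomial.X ^ m * (U * Hv m F v + ∑ i, V i * Hv m (Fs i) v) + c := by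
            rw [Finset.sum_add_distrib, hc, mul_add, Finset.mul_sum]
            ring
    rw [hgr, coeff_add]
    have h1 : (Polynomial.X ^ m
        * (U * Hv m F v + ∑ i, V i * Hv m (Fs i) v)).coeff (d + (l:ℕ)) = 0 := by
      rw [mul_comm, coeff_mul_X_pow', if_neg (by omega)]
    have h2 : c.coeff (d + (l:ℕ)) = 0 := by
      by_cases hc0 : c = 0
      · rw [hc0, coeff_zero]
      · have h3 := natDegree_mul hF₀0 hc0
        rw [← hA] at h3
        have h4 := Av_natDegree m F v
        apply coeff_eq_zero_of_natDegree_lt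
        omega
    rw [h1, h2, add_zero]
  · intro hco i
    set c := tr m (g * rv m v) with hc
    set e := dk m (g * rv m v) with he
    have hdecomp : g * rv m v = c + e * Polynomial.X ^ m := (tr_add_dk m _).symm
    have hccoef : ∀ k, d ≤ k → c.coeff k = 0 := by
      intro k hk
      rw [hc, tr_coeff]
      split_ifs with h
      · have h5 := hco ⟨k - d, by omega⟩
        simpa [show d + (k - d) = k by omega] using h5
      · rfl
    have hcd : c = 0 ∨ c.natDegree < d := by
      by_cases hc0 : c = 0
      · exact Or.inl hc0
      · right
        by_contra hcon
        push_neg at hcon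
        exact hc0 (leadingCoeff_eq_zero.mp (hccoef c.natDegree hcon))
    have hF₀cdeg : (F₀ * c).natDegree ≤ m - 1 := by
      rcases hcd with h | h
      · rw [h, mul_zero, natDegree_zero]; omega
      · refine le_trans natDegree_mul_le ?_
        omega
    have hA : Av m F v = F₀ * c := by
      have h1 : F * rv m v = F₀ * c + (F₀ * e) * Polynomial.X ^ m := by
        calc F * rv m v = F₀ * (g * rv m v) := by rw [hF₀]; ring
          _ = F₀ * c + (F₀ * e) * Polynomial.X ^ m := by rw [hdecomp]; ring
      have h2 := Fr_eq m F v
      have h3 : Av m F v - F₀ * c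
          = (F₀ * e) * Polynomial.X ^ m - Polynomial.X ^ m * Hv m F v := by
        linear_combination h1 - h2
      have h4 : (Polynomial.X : ℝ[X]) ^ m ∣ Av m F v - F₀ * c :=
        ⟨F₀ * e - Hv m F v, by linear_combination h3⟩
      have h5 : (Av m F v - F₀ * c).natDegree ≤ m - 1 :=
        le_trans (natDegree_sub_le _ _) (max_le (Av_natDegree m F v) hF₀cdeg)
      exact sub_eq_zero.mp (eq_zero_of_Xpow_dvd m _ hm h4 h5)
    have hgG : g ∣ Fs i :=
      dvd_trans (gcd_dvd_right F G₀) (Finset.gcd_dvd (Finset.mem_univ i))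
    obtain ⟨Gq, hGq⟩ := hgG
    have hGqcdeg : (Gq * c).natDegree ≤ m - 1 := by
      by_cases hq0 : Gq = 0
      · rw [hq0, zero_mul, natDegree_zero]; omega
      rcases hcd with h | h
      · rw [h, mul_zero, natDegree_zero]; omega
      · have hGdeg := natDegree_mul hg0 hq0
        rw [← hGq] at hGdeg
        have h6 := hFs i
        have h7 : g.natDegree = d := hd.symm
        refine le_trans natDegree_mul_le ?_
        omega
    have hB : Av m (Fs i) v = Gq * c := by
      have h1 : Fs i * rv m v = Gq * c + (Gq * e) * Polynomial.X ^ m := by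
        calc Fs i * rv m v = Gq * (g * rv m v) := by rw [hGq]; ring
          _ = Gq * c + (Gq * e) * Polynomial.X ^ m := by rw [hdecomp]; ring
      have h2 := Fr_eq m (Fs i) v
      have h3 : Av m (Fs i) v - Gq * c
          = (Gq * e) * Polynomial.X ^ m - Polynomial.X ^ m * Hv m (Fs i) v := by
        linear_combination h1 - h2
      have h4 : (Polynomial.X : ℝ[X]) ^ m ∣ Av m (Fs i) v - Gq * c :=
        ⟨Gq * e - Hv m (Fs i) v, by linear_combination h3⟩
      have h5 : (Av m (Fs i) v - Gq * c).natDegree ≤ m - 1 :=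
        le_trans (natDegree_sub_le _ _) (max_le (Av_natDegree m (Fs i) v) hGqcdeg)
      exact sub_eq_zero.mp (eq_zero_of_Xpow_dvd m _ hm h4 h5)
    have hX : Polynomial.X ^ m * Sv m F (Fs i) v = Polynomial.X ^ m * 0 := by
      rw [XmSv, hA, hB, mul_zero]
      calc F * (Gq * c) - Fs i * (F₀ * c)
          = (g * F₀) * (Gq * c) - (g * Gq) * (F₀ * c) := by rw [← hF₀, ← hGq]
        _ = 0 := by ring
    exact mul_left_cancel₀ (pow_ne_zero m X_ne_zero) hX


lemma bezMat_eq (m : ℕ) (F G : ℝ[X]) (hF : F.natDegree ≤ m) (hG : G.natDegree ≤ m)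
    (hm : 0 < m) (x j : Fin m) :
    ((bezoutian F G).coeff (j : ℕ)).coeff (x : ℕ) = (t (j:ℕ) F G).coeff (x:ℕ) := by
  rw [bez_eq_s10 m F G hF hG hm, P_coeff, if_pos j.isLt]

lemma Sv_coeff (m : ℕ) (F G : ℝ[X]) (v : Fin m → ℝ) (x : ℕ) :
    (Sv m F G v).coeff x = ∑ j : Fin m, (t (j:ℕ) F G).coeff x * v j := by
  rw [Sv, finset_sum_coeff]
  exact Finset.sum_congr rfl fun j _ => by rw [coeff_C_mul]; ring

lemma rv_add (m : ℕ) (v w : Fin m → ℝ) : rv m (v + w) = rv m v + rv m w := by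
  rw [rv, rv, rv, ← Finset.sum_add_distrib]
  exact Finset.sum_congr rfl fun j _ => by
    rw [Pi.add_apply, Polynomial.C_add]; ring

lemma rv_smul (m : ℕ) (a : ℝ) (v : Fin m → ℝ) :
    rv m (a • v) = Polynomial.C a * rv m v := by
  rw [rv, rv, Finset.mul_sum]
  exact Finset.sum_congr rfl fun j _ => by
    rw [Pi.smul_apply, smul_eq_mul, Polynomial.C_mul]; ring

end BezAux

theorem bezStack_rank (m d n : ℕ) (F₁ : ℝ[X]) (Fs : Fin n → ℝ[X])
    (hF₁ : F₁.natDegree = m) (hFs : ∀ i, (Fs i).natDegree ≤ m)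
    (hd : d = (gcd F₁ (Finset.univ.gcd Fs)).natDegree) :
    (bezStack m n F₁ Fs).rank = m - d := by
  classical
  rcases Nat.eq_zero_or_pos m with hm | hm
  · subst hm
    have h1 := Matrix.rank_le_card_width (bezStack 0 n F₁ Fs)
    simp only [Fintype.card_fin] at h1
    omega
  set G₀ := Finset.univ.gcd Fs with hG₀
  set g := gcd F₁ G₀ with hg
  have hF0 : F₁ ≠ 0 := fun h => by
    rw [h, Polynomial.natDegree_zero] at hF₁; omega
  have hg0 : g ≠ 0 := fun h => hF0 ((gcd_eq_zero_iff F₁ G₀).mp h).1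
  have hdm : d ≤ m := by
    rw [hd, ← hF₁]
    exact Polynomial.natDegree_le_of_dvd (gcd_dvd_left _ _) hF0
  have hgmonic : g.Monic := by
    have h1 : normalize g = g := normalize_gcd F₁ G₀
    rw [← h1]
    exact Polynomial.monic_normalize hg0
  have hgdeg : g.natDegree = d := hd.symm
  -- the comparison linear map
  set Ψ : (Fin m → ℝ) →ₗ[ℝ] (Fin (m - d) → ℝ) :=
    { toFun := fun v l => (g * BezAux.rv m v).coeff (d + (l:ℕ)),
      map_add' := fun v w => by
        funext l
        show (g * BezAux.rv m (v + w)).coeff _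
          = (g * BezAux.rv m v).coeff _ + (g * BezAux.rv m w).coeff _
        rw [BezAux.rv_add, mul_add, Polynomial.coeff_add]
      map_smul' := fun a v => by
        funext l
        show (g * BezAux.rv m (a • v)).coeff _ = a * (g * BezAux.rv m v).coeff _
        rw [BezAux.rv_smul,
          show g * (Polynomial.C a * BezAux.rv m v)
            = Polynomial.C a * (g * BezAux.rv m v) by ring,
          Polynomial.coeff_C_mul] } with hΨ
  have hΨapply : ∀ (v : Fin m → ℝ) (l : Fin (m - d)),
      Ψ v l = (g * BezAux.rv m v).coeff (d + (l:ℕ)) := fun v l => rfl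
  -- matrix application in terms of Sv
  have hmv : ∀ (v : Fin m → ℝ) (p : Fin n × Fin m),
      (bezStack m n F₁ Fs).mulVec v p = (BezAux.Sv m F₁ (Fs p.1) v).coeff ((p.2:ℕ)) := by
    intro v p
    rw [BezAux.Sv_coeff]
    simp only [Matrix.mulVec, dotProduct]
    apply Finset.sum_congr rfl
    intro j _
    rw [bezStack, bezMat]
    rw [BezAux.bezMat_eq m F₁ (Fs p.1) (le_of_eq hF₁) (hFs p.1) hm]
  -- kernels agree
  have hker : LinearMap.ker (bezStack m n F₁ Fs).mulVecLin = LinearMap.ker Ψ := by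
    ext v
    rw [LinearMap.mem_ker, LinearMap.mem_ker, Matrix.mulVecLin_apply]
    constructor
    · intro h0
      have hSv : ∀ i, BezAux.Sv m F₁ (Fs i) v = 0 := by
        intro i
        refine Polynomial.ext fun k => ?_
        rw [Polynomial.coeff_zero]
        by_cases hk : k < m
        · have h2 := congrFun h0 (i, (⟨k, hk⟩ : Fin m))
          rw [hmv] at h2
          simpa using h2
        · exact Polynomial.coeff_eq_zero_of_natDegree_lt
            (lt_of_le_of_lt
              (BezAux.Sv_natDegree m F₁ (Fs i) v (le_of_eq hF₁) (hFs i) hm) (by omega))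
      funext l
      have h3 := (BezAux.kernel_iff m d n F₁ Fs hm hF₁ hFs hd v).mp hSv l
      rw [hΨapply]
      exact h3
    · intro h0
      have hSv := (BezAux.kernel_iff m d n F₁ Fs hm hF₁ hFs hd v).mpr
        (fun l => by rw [← hΨapply]; exact congrFun h0 l)
      funext p
      rw [hmv, hSv p.1, Polynomial.coeff_zero]
      rfl
  -- surjectivity of Ψ
  have hΨsurj : Function.Surjective Ψ := by
    intro y
    set T : Matrix (Fin (m - d)) (Fin (m - d)) ℝ :=
      Matrix.of fun l k => (g * Polynomial.X ^ (k:ℕ)).coeff (d + (l:ℕ)) with hT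
    have hTentry : ∀ l k : Fin (m - d),
        T l k = (g * Polynomial.X ^ (k:ℕ)).coeff (d + (l:ℕ)) := fun l k => rfl
    have hTut : T.BlockTriangular id := by
      intro l k hlk
      have hkl : (k : ℕ) < (l : ℕ) := by simpa using hlk
      rw [hTentry, Polynomial.coeff_mul_X_pow', if_pos (by omega)]
      refine Polynomial.coeff_eq_zero_of_natDegree_lt ?_
      rw [hgdeg]
      omega
    have hTdiag : ∀ k : Fin (m - d), T k k = 1 := by
      intro k
      have hk1 : (k:ℕ) ≤ d + (k:ℕ) := Nat.le_add_left _ _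
      have hk2 : d + (k:ℕ) - (k:ℕ) = d := by omega
      rw [hTentry, Polynomial.coeff_mul_X_pow', if_pos hk1, hk2, ← hgdeg]
      exact hgmonic.coeff_natDegree
    have hTdet : T.det = 1 := by
      rw [Matrix.det_of_upperTriangular hTut]
      exact Finset.prod_eq_one fun k _ => hTdiag k
    have hTunit : IsUnit T.det := by rw [hTdet]; exact isUnit_one
    set w : Fin (m - d) → ℝ := T⁻¹.mulVec y with hw
    set emb : Fin (m - d) → Fin m := fun k =>
      ⟨m - 1 - (k:ℕ), lt_of_le_of_lt (Nat.sub_le (m-1) _) (Nat.sub_lt hm Nat.one_pos)⟩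
      with hemb
    -- the section
    set sv : Fin m → ℝ := fun j =>
      ∑ k : Fin (m - d), if j = emb k then w k else 0 with hsv
    refine ⟨sv, ?_⟩
    have hrs : BezAux.rv m sv = ∑ k : Fin (m - d), Polynomial.C (w k) * Polynomial.X ^ (k:ℕ) := by
      rw [BezAux.rv]
      have h1 : ∀ j : Fin m, Polynomial.C (sv j) * Polynomial.X ^ (m - 1 - (j:ℕ))
          = ∑ k : Fin (m - d),
              if j = emb k
              then Polynomial.C (w k) * Polynomial.X ^ (m - 1 - (j:ℕ)) else 0 := by
        intro j
        rw [hsv]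
        show Polynomial.C (∑ k : Fin (m - d), if j = _ then w k else 0) * _ = _
        rw [map_sum, Finset.sum_mul]
        apply Finset.sum_congr rfl
        intro k _
        split_ifs with hjk
        · rfl
        · rw [map_zero, zero_mul]
      rw [Finset.sum_congr rfl fun j _ => h1 j, Finset.sum_comm]
      apply Finset.sum_congr rfl
      intro k _
      rw [Finset.sum_ite_eq' Finset.univ (emb k)]
      rw [if_pos (Finset.mem_univ _)]
      have h1 : (k:ℕ) ≤ m - 1 :=
        Nat.le_pred_of_lt (Nat.lt_of_lt_of_le k.isLt (Nat.sub_le m d))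
      have hexp : m - 1 - ((emb k : Fin m) : ℕ) = (k : ℕ) := by
        show m - 1 - (m - 1 - (k:ℕ)) = (k:ℕ)
        exact Nat.sub_sub_self h1
      rw [hexp]
    funext l
    rw [hΨapply, hrs, Finset.mul_sum, Polynomial.finset_sum_coeff]
    have h2 : ∀ k : Fin (m - d),
        (g * (Polynomial.C (w k) * Polynomial.X ^ (k:ℕ))).coeff (d + (l:ℕ))
          = T l k * w k := by
      intro k
      rw [show g * (Polynomial.C (w k) * Polynomial.X ^ (k:ℕ))
          = Polynomial.C (w k) * (g * Polynomial.X ^ (k:ℕ)) by ring,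
        Polynomial.coeff_C_mul, hTentry]
      ring
    rw [Finset.sum_congr rfl fun k _ => h2 k]
    have h3 : ∑ k : Fin (m - d), T l k * w k = (T.mulVec w) l := rfl
    rw [h3, hw, Matrix.mulVec_mulVec, Matrix.mul_nonsing_inv T hTunit, Matrix.one_mulVec]
  -- rank-nullity bookkeeping
  have hrk1 := LinearMap.finrank_range_add_finrank_ker (bezStack m n F₁ Fs).mulVecLin
  have hrk2 := LinearMap.finrank_range_add_finrank_ker Ψ
  have hfr1 : Module.finrank ℝ (Fin m → ℝ) = m := Module.finrank_fin_fun ℝ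
  have hfr2 : Module.finrank ℝ (Fin (m - d) → ℝ) = m - d := Module.finrank_fin_fun ℝ
  have hrangeΨ : LinearMap.range Ψ = ⊤ := LinearMap.range_eq_top.mpr hΨsurj
  have hfr3 : Module.finrank ℝ (LinearMap.range Ψ) = m - d := by
    rw [hrangeΨ, finrank_top, hfr2]
  have hkerdim : Module.finrank ℝ (LinearMap.ker Ψ) = d := by
    rw [hfr3, hfr1] at hrk2
    omega
  have hrank : (bezStack m n F₁ Fs).rank
      = Module.finrank ℝ (LinearMap.range (bezStack m n F₁ Fs).mulVecLin) := rfl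
  rw [hrank]
  rw [hker, hkerdim, hfr1] at hrk1
  omega
end
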